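/- Let n ≥ 1, q ∈ (1,2), and δ > n(1/q - 1/2) > 0. Then for every measurable u on ℝⁿ, ‖u‖_{L^q} ≤ C ‖u‖_{L²}^{1 - (n/δ)(2-q)/(2q)} ‖|·|^δ u‖_{L²}^{(n/δ)(2-q)/(2q)}, provided the right-hand side is finite. -/

import Mathlib

open MeasureTheory
open Metric ENNReal Module


private lemma tail_lt_top {n : ℕ} {s : ℝ} (hs : (n:ℝ) < s) :
    ∫⁻ x : EuclideanSpace ℝ (Fin n) in {x | 1 < ‖x‖}, ENNReal.ofReal (‖x‖ ^ (-s)) < ⊤ := by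
  have hs0 : 0 < s := lt_of_le_of_lt (Nat.cast_nonneg n) hs
  have hmeas : MeasurableSet {x : EuclideanSpace ℝ (Fin n) | 1 < ‖x‖} :=
    measurableSet_lt measurable_const measurable_norm
  have hb : ∀ x : EuclideanSpace ℝ (Fin n), x ∈ {x : EuclideanSpace ℝ (Fin n) | 1 < ‖x‖} →
      ENNReal.ofReal (‖x‖ ^ (-s)) ≤ ENNReal.ofReal (2 ^ s * (1 + ‖x‖) ^ (-s)) := by
    intro x hx
    have h1 : (1:ℝ) < ‖x‖ := hx
    have h0 : (0:ℝ) < ‖x‖ := lt_trans one_pos h1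
    apply ENNReal.ofReal_le_ofReal
    have hle : (1 + ‖x‖) ≤ 2 * ‖x‖ := by linarith
    have h2 : (2 * ‖x‖) ^ (-s) ≤ (1 + ‖x‖) ^ (-s) :=
      Real.rpow_le_rpow_of_nonpos (by linarith) hle (neg_nonpos.mpr hs0.le)
    have h3 : (2 * ‖x‖) ^ (-s) = 2 ^ (-s) * ‖x‖ ^ (-s) :=
      Real.mul_rpow (by norm_num) h0.le
    have h4 : ‖x‖ ^ (-s) = 2 ^ s * (2 * ‖x‖) ^ (-s) := by
      rw [h3, ← mul_assoc, ← Real.rpow_add (by norm_num : (0:ℝ) < 2)]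
      simp
    rw [h4]
    exact mul_le_mul_of_nonneg_left h2 (Real.rpow_nonneg (by norm_num) s)
  calc ∫⁻ x : EuclideanSpace ℝ (Fin n) in {x | 1 < ‖x‖}, ENNReal.ofReal (‖x‖ ^ (-s))
      ≤ ∫⁻ x : EuclideanSpace ℝ (Fin n) in {x | 1 < ‖x‖},
          ENNReal.ofReal (2 ^ s * (1 + ‖x‖) ^ (-s)) := setLIntegral_mono' hmeas hb
    _ ≤ ∫⁻ x : EuclideanSpace ℝ (Fin n), ENNReal.ofReal (2 ^ s * (1 + ‖x‖) ^ (-s)) :=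
        setLIntegral_le_lintegral _ _
    _ = ENNReal.ofReal (2 ^ s) * ∫⁻ x : EuclideanSpace ℝ (Fin n),
          ENNReal.ofReal ((1 + ‖x‖) ^ (-s)) := by
        have he : ∀ x : EuclideanSpace ℝ (Fin n), ENNReal.ofReal (2 ^ s * (1 + ‖x‖) ^ (-s))
            = ENNReal.ofReal (2 ^ s) * ENNReal.ofReal ((1 + ‖x‖) ^ (-s)) := fun x =>
          ENNReal.ofReal_mul (Real.rpow_nonneg (by norm_num) s)
        simp_rw [he]
        exact lintegral_const_mul' _ _ ENNReal.ofReal_ne_top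
    _ < ⊤ := by
        refine ENNReal.mul_lt_top ENNReal.ofReal_lt_top ?_
        exact finite_integral_one_add_norm (by simpa using hs)

private lemma tail_scale {n : ℕ} (s : ℝ) {R : ℝ} (hR : 0 < R) :
    ∫⁻ x : EuclideanSpace ℝ (Fin n) in {x | R < ‖x‖}, ENNReal.ofReal (‖x‖ ^ (-s))
      = ENNReal.ofReal (R ^ ((n:ℝ) - s)) *
        ∫⁻ x : EuclideanSpace ℝ (Fin n) in {x | 1 < ‖x‖}, ENNReal.ofReal (‖x‖ ^ (-s)) := by
  set E := EuclideanSpace ℝ (Fin n)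
  have hmR : MeasurableSet {x : E | R < ‖x‖} := measurableSet_lt measurable_const measurable_norm
  have hm1 : MeasurableSet {x : E | 1 < ‖x‖} := measurableSet_lt measurable_const measurable_norm
  set g : E → ℝ≥0∞ := fun x => {x : E | R < ‖x‖}.indicator (fun x => ENNReal.ofReal (‖x‖ ^ (-s))) x
    with hg
  have hgm : Measurable g :=
    Measurable.indicator ((measurable_norm.pow measurable_const).ennreal_ofReal) hmR
  have hmap : Measure.map (R • · : E → E) volume
      = ENNReal.ofReal ((R ^ finrank ℝ E)⁻¹) • (volume : Measure E) := by
    simpa [abs_of_nonneg (inv_nonneg.mpr (pow_nonneg hR.le _))] using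
      Measure.map_addHaar_smul (volume : Measure E) (r := R) hR.ne'
  have key : ∫⁻ y : E, g (R • y) = ENNReal.ofReal ((R ^ finrank ℝ E)⁻¹) * ∫⁻ x : E, g x := by
    rw [← lintegral_map hgm (measurable_const_smul R), hmap]
    simp [lintegral_smul_measure]
  have hcomp : ∀ y : E, g (R • y) =
      {y : E | 1 < ‖y‖}.indicator (fun y => ENNReal.ofReal (R ^ (-s)) *
        ENNReal.ofReal (‖y‖ ^ (-s))) y := by
    intro y
    have hnorm : ‖R • y‖ = R * ‖y‖ := by
      rw [norm_smul, Real.norm_eq_abs, abs_of_pos hR]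
    simp only [hg, Set.indicator_apply, Set.mem_setOf_eq]
    by_cases hy : 1 < ‖y‖
    · have hmem : R < ‖R • y‖ := by rw [hnorm]; nlinarith
      rw [if_pos hmem, if_pos hy, hnorm,
        Real.mul_rpow hR.le (norm_nonneg y), ENNReal.ofReal_mul (Real.rpow_nonneg hR.le _)]
    · have hmem : ¬ (R < ‖R • y‖) := by
        rw [hnorm]; push_neg at hy ⊢; nlinarith
      rw [if_neg hmem, if_neg hy]
  have key2 : ∫⁻ y : E, g (R • y)
      = ENNReal.ofReal (R ^ (-s)) * ∫⁻ x : E in {x | 1 < ‖x‖}, ENNReal.ofReal (‖x‖ ^ (-s)) := by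
    simp_rw [hcomp]
    have hc : ∀ y : E, {y : E | 1 < ‖y‖}.indicator (fun y => ENNReal.ofReal (R ^ (-s)) *
        ENNReal.ofReal (‖y‖ ^ (-s))) y
        = ENNReal.ofReal (R ^ (-s)) *
          {y : E | 1 < ‖y‖}.indicator (fun y => ENNReal.ofReal (‖y‖ ^ (-s))) y := fun y =>
      Set.indicator_const_mul _ _ _ y
    simp_rw [hc]
    rw [lintegral_const_mul' _ _ ENNReal.ofReal_ne_top, ← lintegral_indicator hm1]
  have hL : ∫⁻ x : E in {x | R < ‖x‖}, ENNReal.ofReal (‖x‖ ^ (-s)) = ∫⁻ x : E, g x :=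
    (lintegral_indicator hmR _).symm
  have hone : ENNReal.ofReal (R ^ finrank ℝ E) * ENNReal.ofReal ((R ^ finrank ℝ E)⁻¹) = 1 := by
    rw [← ENNReal.ofReal_mul (pow_pos hR _).le, mul_inv_cancel₀ (pow_pos hR _).ne',
      ENNReal.ofReal_one]
  have hfr : finrank ℝ E = n := finrank_euclideanSpace_fin
  calc ∫⁻ x : E in {x | R < ‖x‖}, ENNReal.ofReal (‖x‖ ^ (-s))
      = ENNReal.ofReal (R ^ finrank ℝ E) *
        (ENNReal.ofReal ((R ^ finrank ℝ E)⁻¹) * ∫⁻ x : E, g x) := by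
        rw [← mul_assoc, hone, one_mul, hL]
    _ = ENNReal.ofReal (R ^ finrank ℝ E) * (ENNReal.ofReal (R ^ (-s)) *
          ∫⁻ x : E in {x | 1 < ‖x‖}, ENNReal.ofReal (‖x‖ ^ (-s))) := by
        rw [← key, key2]
    _ = ENNReal.ofReal (R ^ ((n:ℝ) - s)) *
          ∫⁻ x : E in {x | 1 < ‖x‖}, ENNReal.ofReal (‖x‖ ^ (-s)) := by
        rw [← mul_assoc, ← ENNReal.ofReal_mul (pow_pos hR _).le, hfr,
          ← Real.rpow_natCast R n, ← Real.rpow_add hR, ← sub_eq_add_neg]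

private lemma holder_piece {α : Type*} [MeasurableSpace α] {μ : Measure α}
    {f g : α → ℝ≥0∞} (hf : Measurable f) (hg : Measurable g) {q : ℝ}
    (hq1 : 1 < q) (hq2 : q < 2) :
    ∫⁻ x, f x * g x ∂μ ≤
      (∫⁻ x, f x ^ (2/q) ∂μ) ^ (q/2) * (∫⁻ x, g x ^ (2/(2-q)) ∂μ) ^ ((2-q)/2) := by
  have hq0 : 0 < q := lt_trans one_pos hq1
  have h2q : 0 < 2 - q := by linarith
  have hpq : Real.HolderConjugate (2/q) (2/(2-q)) := by
    refine Real.holderConjugate_iff.mpr ⟨?_, ?_⟩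
    · rw [lt_div_iff₀ hq0]; linarith
    · rw [inv_div, inv_div]; ring
  have := ENNReal.lintegral_mul_le_Lp_mul_Lq μ hpq hf.aemeasurable hg.aemeasurable
  simp only [Pi.mul_apply] at this
  rwa [one_div_div, one_div_div] at this

/-- interpolation inequality
‖u‖_{L^q} ≤ C ‖u‖_{L²}^{1-a} ‖|x|^δ u‖_{L²}^a with a = (n/δ)(2-q)/(2q),
valid for q ∈ (1,2) and δ > n(1/q - 1/2) > 0. -/
theorem stmt_12 (n : ℕ) (hn : 1 ≤ n) (q δ : ℝ) (hq : q ∈ Set.Ioo (1:ℝ) 2)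
    (hδ' : 0 < (n:ℝ) * (1/q - 1/2)) (hδ : (n:ℝ) * (1/q - 1/2) < δ) :
    ∃ C : ℝ, 0 < C ∧ ∀ u : EuclideanSpace ℝ (Fin n) → ℝ, Measurable u →
      eLpNorm u (ENNReal.ofReal q) volume ≤
        ENNReal.ofReal C *
          (eLpNorm u 2 volume) ^ (1 - ((n:ℝ)/δ)*(2-q)/(2*q)) *
          (eLpNorm (fun x => ‖x‖ ^ δ * u x) 2 volume) ^ (((n:ℝ)/δ)*(2-q)/(2*q)) := by
  obtain ⟨hq1, hq2⟩ := hq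
  have hq0 : (0:ℝ) < q := lt_trans one_pos hq1
  have h2q : (0:ℝ) < 2 - q := by linarith
  have hn0 : (0:ℝ) < n := by exact_mod_cast hn
  have hδ0 : (0:ℝ) < δ := lt_trans hδ' hδ
  set E := EuclideanSpace ℝ (Fin n)
  set a : ℝ := ((n:ℝ)/δ)*(2-q)/(2*q) with ha_def
  have ha0 : 0 < a := by
    rw [ha_def]; positivity
  have ha1 : a < 1 := by
    rw [ha_def, div_lt_one (by positivity)]
    rw [div_mul_eq_mul_div, div_lt_iff₀ hδ0]
    have : (n:ℝ) * (1/q - 1/2) = (n:ℝ)*(2-q)/(2*q) := by field_simp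
    rw [this] at hδ
    rw [div_lt_iff₀ (by positivity)] at hδ
    nlinarith
  set s : ℝ := 2*q*δ/(2-q) with hs_def
  have hns : (n:ℝ) < s := by
    rw [hs_def, lt_div_iff₀ h2q]
    have : (n:ℝ) * (1/q - 1/2) = (n:ℝ)*(2-q)/(2*q) := by field_simp
    rw [this, div_lt_iff₀ (by positivity)] at hδ
    nlinarith
  -- instances for E
  haveI : Nonempty (Fin n) := ⟨⟨0, hn⟩⟩
  haveI : Nontrivial E := by
    refine ⟨EuclideanSpace.single ⟨0, hn⟩ (1:ℝ), 0, fun h => ?_⟩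
    have h1 : ‖EuclideanSpace.single (⟨0, hn⟩ : Fin n) (1:ℝ)‖ = 0 := by rw [h, norm_zero]
    rw [EuclideanSpace.norm_single] at h1
    norm_num at h1
  set v : ℝ≥0∞ := volume (ball (0:E) 1) with hv_def
  have hvtop : v ≠ ⊤ := measure_ball_lt_top.ne
  set T1 : ℝ≥0∞ := ∫⁻ x : E in {x | 1 < ‖x‖}, ENNReal.ofReal (‖x‖ ^ (-s)) with hT1_def
  have hT1top : T1 ≠ ⊤ := (tail_lt_top hns).ne
  set K : ℝ≥0∞ := (v ^ ((2-q)/2) + T1 ^ ((2-q)/2)) ^ (1/q) with hK_def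
  have hKtop : K ≠ ⊤ := by
    rw [hK_def]
    refine (ENNReal.rpow_lt_top_of_nonneg (by positivity) ?_).ne
    exact (ENNReal.add_lt_top.mpr ⟨ENNReal.rpow_lt_top_of_nonneg (by positivity) hvtop,
      ENNReal.rpow_lt_top_of_nonneg (by positivity) hT1top⟩).ne
  refine ⟨K.toReal + 1, by positivity, ?_⟩
  have hCK : K ≤ ENNReal.ofReal (K.toReal + 1) :=
    calc K = ENNReal.ofReal K.toReal := (ENNReal.ofReal_toReal hKtop).symm
    _ ≤ ENNReal.ofReal (K.toReal + 1) := ENNReal.ofReal_le_ofReal (by linarith)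
  have hC0 : ENNReal.ofReal (K.toReal + 1) ≠ 0 := by
    exact (ENNReal.ofReal_pos.mpr (by positivity)).ne'
  intro u hu
  set A := eLpNorm u 2 volume with hA_def
  set B := eLpNorm (fun x : E => ‖x‖ ^ δ * u x) 2 volume with hB_def
  have hwm : Measurable (fun x : E => ‖x‖ ^ δ * u x) :=
    (measurable_norm.pow measurable_const).mul hu
  -- zero cases
  by_cases hB0 : B = 0
  · have hw0 : (fun x : E => ‖x‖ ^ δ * u x) =ᵐ[volume] 0 :=
      (eLpNorm_eq_zero_iff hwm.aestronglyMeasurable two_ne_zero).mp hB0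
    have hne : ∀ᵐ x : E ∂volume, x ≠ 0 := by
      refine (ae_iff).mpr ?_
      simpa using measure_singleton (0:E)
    have hu0 : u =ᵐ[volume] 0 := by
      filter_upwards [hw0, hne] with x hx hx0
      have hx' : ‖x‖ ^ δ * u x = 0 := hx
      have : ‖x‖ ^ δ ≠ 0 := by
        have : (0:ℝ) < ‖x‖ := norm_pos_iff.mpr hx0
        positivity
      simpa [this] using hx'
    have : eLpNorm u (ENNReal.ofReal q) volume = 0 := by
      rw [eLpNorm_congr_ae hu0, eLpNorm_zero]
    rw [this]; exact zero_le
  by_cases hA0 : A = 0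
  · have hu0 : u =ᵐ[volume] 0 :=
      (eLpNorm_eq_zero_iff hu.aestronglyMeasurable two_ne_zero).mp hA0
    have : eLpNorm u (ENNReal.ofReal q) volume = 0 := by
      rw [eLpNorm_congr_ae hu0, eLpNorm_zero]
    rw [this]; exact zero_le
  by_cases hAtop : A = ⊤
  · have : ENNReal.ofReal (K.toReal + 1) * A ^ (1-a) * B ^ a = ⊤ := by
      rw [hAtop, ENNReal.top_rpow_of_pos (by linarith), ENNReal.mul_top hC0,
        ENNReal.top_mul]
      rw [Ne, ENNReal.rpow_eq_zero_iff]
      push_neg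
      exact ⟨fun h => absurd h hB0, fun _ => ha0.le⟩
    exact this ▸ le_top
  by_cases hBtop : B = ⊤
  · have : ENNReal.ofReal (K.toReal + 1) * A ^ (1-a) * B ^ a = ⊤ := by
      rw [hBtop, ENNReal.top_rpow_of_pos ha0, ENNReal.mul_top]
      rw [Ne, mul_eq_zero]
      push_neg
      refine ⟨hC0, ?_⟩
      rw [Ne, ENNReal.rpow_eq_zero_iff]
      push_neg
      exact ⟨fun h => absurd h hA0, fun _ => by linarith⟩
    exact this ▸ le_top
  -- main case
  set x : ℝ≥0∞ := ∫⁻ a : E, ((‖u a‖₊ : ℝ≥0∞)) ^ (2:ℝ) with hx_def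
  set y : ℝ≥0∞ := ∫⁻ a : E, (ENNReal.ofReal (‖a‖ ^ δ) * (‖u a‖₊ : ℝ≥0∞)) ^ (2:ℝ) with hy_def
  have hA2 : A = x ^ (1/(2:ℝ)) := by
    rw [hA_def, eLpNorm_eq_lintegral_rpow_enorm_toReal two_ne_zero ENNReal.ofNat_ne_top]
    simp only [enorm_eq_nnnorm, ENNReal.toReal_ofNat, hx_def]
    rfl
  have hB2 : B = y ^ (1/(2:ℝ)) := by
    rw [hB_def, eLpNorm_eq_lintegral_rpow_enorm_toReal two_ne_zero ENNReal.ofNat_ne_top]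
    simp only [enorm_eq_nnnorm]
    have hptw : ∀ a : E, ((‖(‖a‖ ^ δ * u a)‖₊ : ℝ≥0∞)) = ENNReal.ofReal (‖a‖ ^ δ) * (‖u a‖₊ : ℝ≥0∞) := by
      intro a
      rw [nnnorm_mul, ENNReal.coe_mul, ← enorm_eq_nnnorm, Real.enorm_eq_ofReal (Real.rpow_nonneg (norm_nonneg a) δ)]
    simp only [ENNReal.toReal_ofNat, hy_def]
    congr 1
    refine lintegral_congr fun a => ?_
    rw [hptw a]
  have hx0 : x ≠ 0 := fun h => hA0 (by rw [hA2, h, ENNReal.zero_rpow_of_pos (by norm_num)])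
  have hxtop : x ≠ ⊤ := fun h => hAtop (by rw [hA2, h, ENNReal.top_rpow_of_pos (by norm_num)])
  have hy0 : y ≠ 0 := fun h => hB0 (by rw [hB2, h, ENNReal.zero_rpow_of_pos (by norm_num)])
  have hytop : y ≠ ⊤ := fun h => hBtop (by rw [hB2, h, ENNReal.top_rpow_of_pos (by norm_num)])
  set P : ℝ≥0∞ := (y / x) ^ (1/(2*δ)) with hP_def
  have hyx0 : y / x ≠ 0 := by
    simp only [Ne, ENNReal.div_eq_zero_iff, not_or]
    exact ⟨hy0, hxtop⟩
  have hyxtop : y / x ≠ ⊤ := (ENNReal.div_lt_top hytop hx0).ne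
  have hP0 : P ≠ 0 := by
    rw [hP_def, Ne, ENNReal.rpow_eq_zero_iff]
    push_neg
    exact ⟨fun h => absurd h hyx0, fun h => absurd h hyxtop⟩
  have hPtop : P ≠ ⊤ := ENNReal.rpow_ne_top_of_nonneg (by positivity) hyxtop
  set R : ℝ := P.toReal with hR_def
  have hR : 0 < R := ENNReal.toReal_pos hP0 hPtop
  have hPR : ENNReal.ofReal R = P := ENNReal.ofReal_toReal hPtop
  have hdiv : ∀ t : ℝ, (y / x) ^ t = y ^ t * x ^ (-t) := by
    intro t
    rw [div_eq_mul_inv, ENNReal.mul_rpow_of_ne_top hytop (ENNReal.inv_ne_top.mpr hx0),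
      ENNReal.inv_rpow, ← ENNReal.rpow_neg]
  have hPt : ∀ t : ℝ, P ^ t = y ^ (t/(2*δ)) * x ^ (-(t/(2*δ))) := by
    intro t
    have h1 : P ^ t = (y/x) ^ (1/(2*δ) * t) := by rw [hP_def, ENNReal.rpow_mul]
    rw [h1, show 1/(2*δ) * t = t/(2*δ) by ring, hdiv]
  -- splitting
  have hmR : MeasurableSet {x : E | R < ‖x‖} := measurableSet_lt measurable_const measurable_norm
  have hcompl : (closedBall (0:E) R)ᶜ = {x : E | R < ‖x‖} := by
    ext z
    simp [Metric.mem_closedBall, dist_zero_right, not_le]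
  have hum : Measurable fun a : E => (‖u a‖₊ : ℝ≥0∞) ^ q :=
    hu.nnnorm.coe_nnreal_ennreal.pow measurable_const
  have hsplit : ∫⁻ a : E, (‖u a‖₊ : ℝ≥0∞) ^ q
      = (∫⁻ a : E in closedBall (0:E) R, (‖u a‖₊ : ℝ≥0∞) ^ q)
        + ∫⁻ a : E in {x : E | R < ‖x‖}, (‖u a‖₊ : ℝ≥0∞) ^ q := by
    rw [← hcompl]
    exact (lintegral_add_compl _ measurableSet_closedBall).symm
  -- piece 1
  have piece1 : ∫⁻ a : E in closedBall (0:E) R, (‖u a‖₊ : ℝ≥0∞) ^ q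
      ≤ x ^ (q/2) * (ENNReal.ofReal (R ^ n) * v) ^ ((2-q)/2) := by
    have hind : ∫⁻ a : E in closedBall (0:E) R, (‖u a‖₊ : ℝ≥0∞) ^ q
        = ∫⁻ a : E, ((‖u a‖₊ : ℝ≥0∞) ^ q) * ((closedBall (0:E) R).indicator 1 a) := by
      rw [← lintegral_indicator measurableSet_closedBall]
      refine lintegral_congr fun a => ?_
      by_cases h : a ∈ closedBall (0:E) R
      · simp [Set.indicator_of_mem h]
      · simp [Set.indicator_of_notMem h]
    rw [hind]
    refine le_trans (holder_piece hum
      (Measurable.indicator measurable_one measurableSet_closedBall) hq1 hq2) (le_of_eq ?_)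
    congr 1
    · congr 1
      · refine lintegral_congr fun a => ?_
        rw [← ENNReal.rpow_mul]
        congr 1
        field_simp
    · have hindpow : ∀ a : E, ((closedBall (0:E) R).indicator (1 : E → ℝ≥0∞) a) ^ (2/(2-q))
          = (closedBall (0:E) R).indicator 1 a := by
        intro a
        by_cases h : a ∈ closedBall (0:E) R
        · simp [Set.indicator_of_mem h]
        · simp [Set.indicator_of_notMem h,
            ENNReal.zero_rpow_of_pos (by positivity : (0:ℝ) < 2/(2-q))]
      simp_rw [hindpow]
      rw [lintegral_indicator_one measurableSet_closedBall]
      congr 1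
      rw [Measure.addHaar_closedBall _ _ hR.le, finrank_euclideanSpace_fin]
  -- piece 2
  have piece2 : ∫⁻ a : E in {x : E | R < ‖x‖}, (‖u a‖₊ : ℝ≥0∞) ^ q
      ≤ y ^ (q/2) * (ENNReal.ofReal (R ^ ((n:ℝ) - s)) * T1) ^ ((2-q)/2) := by
    set f : E → ℝ≥0∞ := fun a => (ENNReal.ofReal (‖a‖ ^ δ) * (‖u a‖₊ : ℝ≥0∞)) ^ q with hf_def
    set g : E → ℝ≥0∞ := fun a =>
      {x : E | R < ‖x‖}.indicator (fun a => ENNReal.ofReal (‖a‖ ^ (-(δ*q)))) a with hg_def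
    have hfm : Measurable f :=
      (((measurable_norm.pow measurable_const).ennreal_ofReal).mul
        hu.nnnorm.coe_nnreal_ennreal).pow measurable_const
    have hgm : Measurable g :=
      Measurable.indicator ((measurable_norm.pow measurable_const).ennreal_ofReal) hmR
    have hind : ∫⁻ a : E in {x : E | R < ‖x‖}, (‖u a‖₊ : ℝ≥0∞) ^ q = ∫⁻ a : E, f a * g a := by
      rw [← lintegral_indicator hmR]
      refine lintegral_congr fun a => ?_
      by_cases h : a ∈ {x : E | R < ‖x‖}
      · have hna : (0:ℝ) < ‖a‖ := lt_trans hR h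
        rw [Set.indicator_of_mem h, hf_def, hg_def]
        simp only
        rw [Set.indicator_of_mem h]
        rw [ENNReal.mul_rpow_of_nonneg _ _ hq0.le]
        have hreal : (‖a‖ ^ δ) ^ q * ‖a‖ ^ (-(δ*q)) = 1 := by
          rw [← Real.rpow_mul (norm_nonneg a), ← Real.rpow_add hna, add_neg_cancel,
            Real.rpow_zero]
        have h1 : (ENNReal.ofReal (‖a‖ ^ δ)) ^ q * ENNReal.ofReal (‖a‖ ^ (-(δ*q))) = 1 := by
          rw [ENNReal.ofReal_rpow_of_pos (Real.rpow_pos_of_pos hna δ),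
            ← ENNReal.ofReal_mul (by positivity), hreal, ENNReal.ofReal_one]
        rw [mul_right_comm, h1, one_mul]
      · rw [Set.indicator_of_notMem h, hg_def]
        simp only
        rw [Set.indicator_of_notMem h, mul_zero]
    rw [hind]
    refine le_trans (holder_piece hfm hgm hq1 hq2) (le_of_eq ?_)
    congr 1
    · congr 1
      refine lintegral_congr fun a => ?_
      rw [hf_def]
      simp only
      rw [← ENNReal.rpow_mul]
      congr 1
      field_simp
    · congr 1
      have h2 : ∀ a : E, g a ^ (2/(2-q))
          = {x : E | R < ‖x‖}.indicator (fun a => ENNReal.ofReal (‖a‖ ^ (-s))) a := by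
        intro a
        rw [hg_def]
        by_cases h : a ∈ {x : E | R < ‖x‖}
        · have hna : (0:ℝ) < ‖a‖ := lt_trans hR h
          simp only
          have hexp : -(δ*q) * (2/(2-q)) = -s := by
            rw [hs_def]; field_simp
          rw [Set.indicator_of_mem h, Set.indicator_of_mem h,
            ENNReal.ofReal_rpow_of_pos (Real.rpow_pos_of_pos hna _),
            ← Real.rpow_mul (norm_nonneg a), hexp]
        · simp only
          rw [Set.indicator_of_notMem h, Set.indicator_of_notMem h,
            ENNReal.zero_rpow_of_pos (by positivity : (0:ℝ) < 2/(2-q))]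
      simp_rw [h2]
      rw [lintegral_indicator hmR, tail_scale s hR]
  -- combine
  have hq2R : ENNReal.ofReal (R ^ n) = P ^ ((n:ℝ)) := by
    rw [ENNReal.ofReal_pow hR.le, hPR, ← ENNReal.rpow_natCast]
  have hRns : ENNReal.ofReal (R ^ ((n:ℝ) - s)) = P ^ ((n:ℝ) - s) := by
    rw [← hPR, ENNReal.ofReal_rpow_of_pos hR]
  have hterm1 : x ^ (q/2) * (ENNReal.ofReal (R ^ n) * v) ^ ((2-q)/2)
      = v ^ ((2-q)/2) * (x ^ (q*(1-a)/2) * y ^ (q*a/2)) := by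
    rw [hq2R, ENNReal.mul_rpow_of_nonneg _ _ (by positivity : (0:ℝ) ≤ (2-q)/2),
      ← ENNReal.rpow_mul, hPt]
    have he : (n:ℝ) * ((2-q)/2) / (2*δ) = q*a/2 := by
      rw [ha_def]; field_simp
    rw [he]
    have hxx : x ^ (q*(1-a)/2) = x ^ (q/2) * x ^ (-(q*a/2)) := by
      rw [← ENNReal.rpow_add _ _ hx0 hxtop]; congr 1; ring
    rw [hxx]
    ring
  have hterm2 : y ^ (q/2) * (ENNReal.ofReal (R ^ ((n:ℝ) - s)) * T1) ^ ((2-q)/2)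
      = T1 ^ ((2-q)/2) * (x ^ (q*(1-a)/2) * y ^ (q*a/2)) := by
    rw [hRns, ENNReal.mul_rpow_of_nonneg _ _ (by positivity : (0:ℝ) ≤ (2-q)/2),
      ← ENNReal.rpow_mul, hPt]
    have he : ((n:ℝ) - s) * ((2-q)/2) / (2*δ) = q*a/2 - q/2 := by
      rw [ha_def, hs_def]; field_simp
    rw [he]
    have hxx : x ^ (-(q*a/2 - q/2)) = x ^ (q*(1-a)/2) := by congr 1; ring
    have hyy : y ^ (q*a/2) = y ^ (q/2) * y ^ (q*a/2 - q/2) := by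
      rw [← ENNReal.rpow_add _ _ hy0 hytop]; congr 1; ring
    rw [hxx, hyy]
    ring
  have main : ∫⁻ a : E, (‖u a‖₊ : ℝ≥0∞) ^ q
      ≤ (v ^ ((2-q)/2) + T1 ^ ((2-q)/2)) * (x ^ (q*(1-a)/2) * y ^ (q*a/2)) := by
    rw [hsplit, add_mul]
    exact add_le_add (piece1.trans_eq hterm1) (piece2.trans_eq hterm2)
  have hq_ne : (ENNReal.ofReal q) ≠ 0 := by
    simp [ENNReal.ofReal_eq_zero, not_le, hq0]
  rw [eLpNorm_eq_lintegral_rpow_enorm_toReal hq_ne ENNReal.ofReal_ne_top,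
    ENNReal.toReal_ofReal hq0.le]
  calc (∫⁻ a : E, (‖u a‖₊ : ℝ≥0∞) ^ q) ^ (1/q)
      ≤ ((v ^ ((2-q)/2) + T1 ^ ((2-q)/2)) * (x ^ (q*(1-a)/2) * y ^ (q*a/2))) ^ (1/q) :=
        ENNReal.rpow_le_rpow main (by positivity)
    _ = K * (x ^ ((1-a)/2) * y ^ (a/2)) := by
        rw [ENNReal.mul_rpow_of_nonneg _ _ (by positivity : (0:ℝ) ≤ 1/q),
          ENNReal.mul_rpow_of_nonneg _ _ (by positivity : (0:ℝ) ≤ 1/q),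
          ← ENNReal.rpow_mul, ← ENNReal.rpow_mul, hK_def]
        have e1 : q*(1-a)/2 * (1/q) = (1-a)/2 := by field_simp
        have e2 : q*a/2 * (1/q) = a/2 := by field_simp
        rw [e1, e2]
    _ ≤ ENNReal.ofReal (K.toReal + 1) * A ^ (1-a) * B ^ a := by
        rw [hA2, hB2, ← ENNReal.rpow_mul, ← ENNReal.rpow_mul, mul_assoc]
        have e1 : (1:ℝ)/2 * (1-a) = (1-a)/2 := by ring
        have e2 : (1:ℝ)/2 * a = a/2 := by ring
        rw [e1, e2]
        exact mul_le_mul_of_nonneg_right hCK zero_le
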